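/- Over the odd alphabet {1,b} with b odd, b ≥ 3, the minimal length l_i of words in generation T_i of the tree of strong bispecial f-smooth words satisfies l_i ≥ Cλ^i − D − 1 for some constants C > 0, D ≥ 0, where λ = (1 + √(2b−1))/2 is the dominant root of X² − X − (b−1)/2. -/

import Mathlib

namespace SmoothWords

/-- Complement of a letter over the alphabet `{a, b}`. -/
def flip (a b c : ℕ) : ℕ := if c = a then b else a

/-- Run-length encoding of a finite word: list of (letter, exponent) pairs. -/
def runs : List ℕ → List (ℕ × ℕ)
  | [] => []
  | c :: t =>
    match runs t with
    | [] => [(c, 1)]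
    | (d, k) :: r => if c = d then (c, k + 1) :: r else (c, 1) :: (d, k) :: r

/-- The exponents of the canonical run-length factorization. -/
def exps (u : List ℕ) : List ℕ := (runs u).map Prod.snd

/-- Boundary cut used by the finite derivatives. -/
def cut (a b p : ℕ) : List ℕ := if p ≤ a then [] else [b]

/-- The finite derivative `D_f`. -/
def Df (a b : ℕ) (u : List ℕ) : List ℕ :=
  match exps u with
  | [] => []
  | [p] => cut a b p
  | p :: q :: rest =>
      cut a b p ++ (q :: rest).dropLast ++ cut a b ((q :: rest).getLast (List.cons_ne_nil _ _))

/-- `u` is f-derivable: letters in `{a,b}`, inner run exponents in `{a,b}`,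
boundary run exponents in `[1, b]`. -/
def Cf1 (a b : ℕ) (u : List ℕ) : Prop :=
  (∀ c ∈ u, c = a ∨ c = b) ∧
  (∀ p ∈ exps u, p ≤ b) ∧
  (∀ p ∈ ((exps u).drop 1).dropLast, p = a ∨ p = b)

/-- `u` is f-smooth: all iterated finite derivatives are f-derivable
(equivalently, some iterate is `ε`). -/
def FSmooth (a b : ℕ) (u : List ℕ) : Prop := ∀ n, Cf1 a b ((Df a b)^[n] u)

/-- The r-derivative `D_r`: keeps all exponents but cuts the last one. -/
def Dr (a b : ℕ) (u : List ℕ) : List ℕ :=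
  match exps u with
  | [] => []
  | p :: rest =>
      (p :: rest).dropLast ++ cut a b ((p :: rest).getLast (List.cons_ne_nil _ _))

/-- `u` is r-derivable. -/
def Cr1 (a b : ℕ) (u : List ℕ) : Prop :=
  (∀ c ∈ u, c = a ∨ c = b) ∧
  (∀ p ∈ exps u, p ≤ b) ∧
  (∀ p ∈ (exps u).dropLast, p = a ∨ p = b)

/-- `u` is r-smooth. -/
def RSmooth (a b : ℕ) (u : List ℕ) : Prop := ∀ n, Cr1 a b ((Dr a b)^[n] u)

/-- `y` is the derivative of the infinite word `x`: `x = x₀^{y₀} x̄₀^{y₁} x₀^{y₂} ⋯`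
with all `y i ∈ {a, b}` (in particular `x` is derivable). -/
def DerivesTo (a b : ℕ) (x y : ℕ → ℕ) : Prop :=
  (∀ i, y i = a ∨ y i = b) ∧
  ∃ S : ℕ → ℕ, S 0 = 0 ∧ (∀ k, S (k + 1) = S k + y k) ∧
    ∀ k i, S k ≤ i → i < S (k + 1) → x i = (flip a b)^[k] (x 0)

/-- An infinite word over `{a,b}` is smooth if it is infinitely derivable. -/
def Smooth (a b : ℕ) (x : ℕ → ℕ) : Prop :=
  (∀ i, x i = a ∨ x i = b) ∧
  ∃ X : ℕ → ℕ → ℕ, X 0 = x ∧ ∀ n, DerivesTo a b (X n) (X (n + 1))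

/-- Auxiliary for the f-primitives: alternate blocks with given exponents,
ending with a block of exponent `a`. -/
def pfAux (a b : ℕ) : ℕ → List ℕ → List ℕ
  | c, [] => List.replicate a c
  | c, p :: t => List.replicate p c ++ pfAux a b (flip a b c) t

/-- The f-primitive `P_{f,c}`. -/
def Pf (a b c : ℕ) (u : List ℕ) : List ℕ :=
  if c = a then List.replicate a a ++ pfAux a b b u
  else (List.replicate a a ++ pfAux a b b u).map (flip a b)

/-- `u` is a bispecial f-smooth word. -/
def Bispecial (a b : ℕ) (u : List ℕ) : Prop :=
  FSmooth a b u ∧ FSmooth a b (a :: u) ∧ FSmooth a b (b :: u) ∧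
    FSmooth a b (u ++ [a]) ∧ FSmooth a b (u ++ [b])

open Classical in
/-- The multiplicity `m(u) = |{aua,aub,bua,bub} ∩ C_f^∞| - 3`. -/
noncomputable def mult (a b : ℕ) (u : List ℕ) : ℤ :=
  (if FSmooth a b (a :: u ++ [a]) then 1 else 0) +
  (if FSmooth a b (a :: u ++ [b]) then 1 else 0) +
  (if FSmooth a b (b :: u ++ [a]) then 1 else 0) +
  (if FSmooth a b (b :: u ++ [b]) then 1 else 0) - 3

/-- The vertex of the tree `T` indexed by the path `s` from the root `ε`
(`false` = child by `P_{f,a}`, `true` = child by `P_{f,b}`). -/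
def node (a b : ℕ) : List Bool → List ℕ
  | [] => []
  | c :: s => Pf a b (if c then b else a) (node a b s)

/-- Total length `f(i) = ∑_{u ∈ T_i} |u|` of generation `i` of `T`. -/
def totalLen (a b i : ℕ) : ℕ :=
  ∑ s : Fin i → Bool, (node a b (List.ofFn s)).length

/-- Generation `i` of the tree `T`, as a finite set of words. -/
def genSet (a b i : ℕ) : Finset (List ℕ) :=
  (Finset.univ : Finset (Fin i → Bool)).image fun s => node a b (List.ofFn s)

/-- `b_i(n) = |T_i ∩ A^n|`. -/
def bfun (a b i n : ℕ) : ℕ := ((genSet a b i).filter fun u => u.length = n).card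

/-- `s_i(n) = ∑_{m<n} b_i(m)`. -/
def sfun (a b i n : ℕ) : ℕ := ∑ m ∈ Finset.range n, bfun a b i m

/-- `p_i(n) = ∑_{m<n} s_i(m)`. -/
def pfun (a b i n : ℕ) : ℕ := ∑ m ∈ Finset.range n, sfun a b i m

/-- `p(n) = ∑_i p_i(n)`. -/
noncomputable def pTot (a b n : ℕ) : ℝ := ∑' i : ℕ, (pfun a b i n : ℝ)

/-- `l_i`, the minimal length of a word of generation `i` of `T`. -/
noncomputable def li (a b i : ℕ) : ℕ :=
  sInf {m | ∃ s : Fin i → Bool, (node a b (List.ofFn s)).length = m}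

/-- `u` is a factor of the infinite word `x`. -/
def FactorOf (u : List ℕ) (x : ℕ → ℕ) : Prop :=
  ∃ i, u = (List.range u.length).map fun j => x (i + j)


section Proof19

variable {b : ℕ}

lemma flip_one' : flip 1 b 1 = b := by simp [flip]

lemma flip_of_ne (c : ℕ) (hc : c ≠ 1) : flip 1 b c = 1 := by simp [flip, hc]

lemma flip_mem (c : ℕ) : flip 1 b c = 1 ∨ flip 1 b c = b := by
  unfold flip; split
  · exact Or.inr rfl
  · exact Or.inl rfl

lemma pfAux_length (u : List ℕ) : ∀ c, (pfAux 1 b c u).length = u.sum + 1 := by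
  induction u with
  | nil => intro c; simp [pfAux]
  | cons p t ih => intro c; simp [pfAux, ih]; omega

lemma pfAux_mem (u : List ℕ) : ∀ c, (c = 1 ∨ c = b) →
    ∀ x ∈ pfAux 1 b c u, x = 1 ∨ x = b := by
  induction u with
  | nil =>
    intro c hc x hx
    simp [pfAux] at hx
    subst hx; exact hc
  | cons p t ih =>
    intro c hc x hx
    simp [pfAux] at hx
    rcases hx with ⟨_, rfl⟩ | hx
    · exact hc
    · exact ih _ (flip_mem c) x hx

lemma map_flip_pfAux (u : List ℕ) : ∀ c,
    (pfAux 1 b c u).map (flip 1 b) = pfAux 1 b (flip 1 b c) u := by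
  induction u with
  | nil => intro c; simp [pfAux]
  | cons p t ih => intro c; simp [pfAux, ih]

lemma Pf_one (u : List ℕ) : Pf 1 b 1 u = 1 :: pfAux 1 b b u := by
  simp [Pf]

lemma Pf_b (hbne : b ≠ 1) (u : List ℕ) : Pf 1 b b u = b :: pfAux 1 b 1 u := by
  unfold Pf
  rw [if_neg hbne]
  simp [map_flip_pfAux, flip_one', flip_of_ne b hbne]

lemma node_cases (hbne : b ≠ 1) (c : Bool) (s : List Bool) :
    ∃ h p, (h = 1 ∨ h = b) ∧ (p = 1 ∨ p = b) ∧
      node 1 b (c :: s) = h :: pfAux 1 b p (node 1 b s) := by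
  cases c
  · exact ⟨1, b, Or.inl rfl, Or.inr rfl, by simp [node, Pf_one]⟩
  · exact ⟨b, 1, Or.inr rfl, Or.inl rfl, by simp [node, Pf_b hbne]⟩

lemma node_length_cons (hbne : b ≠ 1) (c : Bool) (s : List Bool) :
    (node 1 b (c :: s)).length = (node 1 b s).sum + 2 := by
  obtain ⟨h, p, _, _, he⟩ := node_cases hbne c s
  rw [he]
  simp [pfAux_length]

lemma node_mem (hbne : b ≠ 1) : ∀ s : List Bool, ∀ x ∈ node 1 b s, x = 1 ∨ x = b := by
  intro s
  induction s with
  | nil => intro x hx; simp [node] at hx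
  | cons c t ih =>
    obtain ⟨h, p, hh, hp, he⟩ := node_cases hbne c t
    rw [he]
    intro x hx
    rcases List.mem_cons.mp hx with rfl | hx
    · exact hh
    · exact pfAux_mem _ p hp x hx

lemma odd_sum_parity : ∀ l : List ℕ, (∀ x ∈ l, Odd x) → Even (l.sum + l.length) := by
  intro l
  induction l with
  | nil => simp
  | cons a t ih =>
    intro h
    have ha : Odd a := h a List.mem_cons_self
    have ht := ih fun x hx => h x (List.mem_cons_of_mem a hx)
    obtain ⟨m, hm⟩ := ht
    obtain ⟨j, hj⟩ := ha
    exact ⟨m + j + 1, by simp [List.sum_cons]; omega⟩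

lemma node_length_even (hbne : b ≠ 1) (hbo : Odd b) :
    ∀ s : List Bool, Even (node 1 b s).length := by
  intro s
  induction s with
  | nil => simp [node]
  | cons c t ih =>
    rw [node_length_cons hbne]
    have hodd : ∀ x ∈ node 1 b t, Odd x := by
      intro x hx
      rcases node_mem hbne t x hx with rfl | rfl
      · exact odd_one
      · exact hbo
    obtain ⟨m, hm⟩ := odd_sum_parity _ hodd
    obtain ⟨k, hk⟩ := ih
    exact ⟨m - k + 1, by omega⟩

lemma pfAux_sum (hb3 : 3 ≤ b) : ∀ u : List ℕ, (∀ x ∈ u, 1 ≤ x) →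
    u.sum + (b - 1) * ((u.length + 1) / 2) + 1 ≤ (pfAux 1 b b u).sum ∧
    u.sum + (b - 1) * (u.length / 2) + 1 ≤ (pfAux 1 b 1 u).sum := by
  have hbne : b ≠ 1 := by omega
  intro u
  induction u with
  | nil => intro _; constructor <;> simp [pfAux] <;> omega
  | cons p t ih =>
    intro h
    have hp : 1 ≤ p := h p List.mem_cons_self
    obtain ⟨ihb, ih1⟩ := ih fun x hx => h x (List.mem_cons_of_mem p hx)
    have h2 : p + (b - 1) ≤ p * b := by
      have h3 : 1 * (b - 1) ≤ p * (b - 1) := Nat.mul_le_mul hp (le_refl _)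
      have h4 : p * b = p * (b - 1) + p * 1 := by
        rw [← Nat.mul_add]; congr 1; omega
      rw [one_mul] at h3
      rw [Nat.mul_one] at h4
      linarith
    constructor
    · have he : pfAux 1 b b (p :: t) = List.replicate p b ++ pfAux 1 b 1 t := by
        simp [pfAux, flip_of_ne b hbne]
      rw [he, List.sum_append, List.sum_replicate, List.sum_cons, smul_eq_mul]
      have e1 : ((p :: t).length + 1) / 2 = t.length / 2 + 1 := by
        simp [List.length_cons]; omega
      rw [e1, Nat.mul_add, Nat.mul_one]
      linarith
    · have he : pfAux 1 b 1 (p :: t) = List.replicate p 1 ++ pfAux 1 b b t := by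
        have hf : flip 1 b 1 = b := by simp [flip]
        simp [pfAux, hf]
      rw [he, List.sum_append, List.sum_replicate, List.sum_cons, smul_eq_mul, Nat.mul_one]
      have e1 : (p :: t).length / 2 = (t.length + 1) / 2 := by
        simp [List.length_cons]
      rw [e1]
      linarith

lemma node_sum_cons (hb3 : 3 ≤ b) (c : Bool) (s : List Bool) :
    (node 1 b s).sum + (b - 1) * ((node 1 b s).length / 2) + 2 ≤ (node 1 b (c :: s)).sum := by
  have hbne : b ≠ 1 := by omega
  have hpos : ∀ x ∈ node 1 b s, 1 ≤ x := fun x hx => by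
    rcases node_mem hbne s x hx with rfl | rfl <;> omega
  obtain ⟨hbB, hb1⟩ := pfAux_sum hb3 (node 1 b s) hpos
  cases c
  · rw [show node 1 b (false :: s) = Pf 1 b 1 (node 1 b s) from rfl, Pf_one, List.sum_cons]
    have h5 : (b - 1) * ((node 1 b s).length / 2) ≤ (b - 1) * (((node 1 b s).length + 1) / 2) :=
      Nat.mul_le_mul (le_refl _) (by omega)
    linarith
  · rw [show node 1 b (true :: s) = Pf 1 b b (node 1 b s) from rfl, Pf_b hbne, List.sum_cons]
    have : 1 ≤ b := by omega
    linarith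

lemma node_rec (hb3 : 3 ≤ b) (c c' : Bool) (s : List Bool) :
    (node 1 b (c' :: s)).length + (b - 1) * ((node 1 b s).length / 2) + 2
      ≤ (node 1 b (c :: c' :: s)).length := by
  have hbne : b ≠ 1 := by omega
  rw [node_length_cons hbne, node_length_cons hbne]
  linarith [node_sum_cons hb3 c' s]

lemma node_length_lb (hb3 : 3 ≤ b) (hbo : Odd b) (l : ℝ) (hl1 : 1 ≤ l)
    (hl2 : l ^ 2 = l + ((b : ℝ) - 1) / 2) :
    ∀ n, ∀ s : List Bool, s.length = n → 1 ≤ n →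
      2 / l ^ 2 * l ^ n ≤ ((node 1 b s).length : ℝ) := by
  have hbne : b ≠ 1 := by omega
  have hl0 : (0:ℝ) < l := by linarith
  have hC : (0:ℝ) < 2 / l ^ 2 := by positivity
  have hll : l ≤ l ^ 2 := by nlinarith
  have he2 : 2 / l ^ 2 * l ^ 2 = 2 := by field_simp
  intro n
  induction n using Nat.strong_induction_on with
  | _ n ih =>
    match n, ih with
    | 0, _ => intro s _ h; exact absurd h (by omega)
    | 1, _ =>
      intro s hs _
      obtain ⟨c, rfl⟩ := List.length_eq_one_iff.mp hs
      have hL : (node 1 b [c]).length = 2 := by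
        rw [node_length_cons hbne]; simp [node]
      rw [hL]
      have h1 : 2 / l ^ 2 * l ^ 1 ≤ 2 / l ^ 2 * l ^ 2 := by
        apply mul_le_mul_of_nonneg_left _ (le_of_lt hC)
        simpa using hll
      push_cast
      linarith
    | 2, _ =>
      intro s hs _
      rcases s with _ | ⟨c, t⟩
      · simp at hs
      have hL : 2 ≤ (node 1 b (c :: t)).length := by
        rw [node_length_cons hbne]; omega
      have : (2:ℝ) ≤ ((node 1 b (c :: t)).length : ℝ) := by exact_mod_cast hL
      linarith
    | (m + 3), ih =>
      intro s hs _
      rcases s with _ | ⟨c, s'⟩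
      · simp at hs
      rcases s' with _ | ⟨c', t⟩
      · simp at hs
      have ht : t.length = m + 1 := by simpa using hs
      have h1 := ih (m + 2) (by omega) (c' :: t) (by simp [ht]) (by omega)
      have h2 := ih (m + 1) (by omega) t ht (by omega)
      obtain ⟨k, hk⟩ := node_length_even hbne hbo t
      have hdiv : (node 1 b t).length / 2 = k := by omega
      have hrec := node_rec hb3 c c' t
      rw [hdiv] at hrec
      have hb1 : (1:ℝ) ≤ (b:ℝ) := by exact_mod_cast (by omega : 1 ≤ b)
      have hrecR : ((node 1 b (c' :: t)).length : ℝ) + ((b:ℝ) - 1) * (k : ℝ) + 2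
          ≤ ((node 1 b (c :: c' :: t)).length : ℝ) := by
        have := hrec
        have hcast : (((node 1 b (c' :: t)).length + (b - 1) * k + 2 : ℕ) : ℝ)
            ≤ (((node 1 b (c :: c' :: t)).length : ℕ) : ℝ) := by exact_mod_cast this
        push_cast [Nat.cast_sub (show 1 ≤ b by omega)] at hcast
        linarith
      have hkR : ((node 1 b t).length : ℝ) = 2 * (k : ℝ) := by
        have : (node 1 b t).length = 2 * k := by omega
        exact_mod_cast this
      rw [hkR] at h2
      have hq0 : (0:ℝ) ≤ ((b:ℝ) - 1) / 2 := by
        have : (3:ℝ) ≤ (b:ℝ) := by exact_mod_cast hb3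
        linarith
      have h2' : 2 / l ^ 2 * l ^ (m + 1) * (((b:ℝ) - 1) / 2)
          ≤ 2 * (k : ℝ) * (((b:ℝ) - 1) / 2) := mul_le_mul_of_nonneg_right h2 hq0
      calc 2 / l ^ 2 * l ^ (m + 3)
          = 2 / l ^ 2 * l ^ (m + 2) + 2 / l ^ 2 * l ^ (m + 1) * (((b:ℝ) - 1) / 2) := by
            linear_combination (2 / l ^ 2 * l ^ (m + 1)) * hl2
        _ ≤ ((node 1 b (c' :: t)).length : ℝ) + 2 * (k : ℝ) * (((b:ℝ) - 1) / 2) :=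
            add_le_add h1 h2'
        _ = ((node 1 b (c' :: t)).length : ℝ) + ((b:ℝ) - 1) * (k : ℝ) := by ring
        _ ≤ ((node 1 b (c :: c' :: t)).length : ℝ) := by linarith

end Proof19

theorem stmt19 (b : ℕ) (hb : 3 ≤ b) (hbo : Odd b) :
    ∃ C > (0 : ℝ), ∃ D ≥ (0 : ℝ), ∀ i : ℕ,
      C * ((1 + Real.sqrt (2 * b - 1)) / 2) ^ i - D - 1 ≤ (li 1 b i : ℝ) := by
  have hb3 : (3:ℝ) ≤ (b:ℝ) := by exact_mod_cast hb
  set r := Real.sqrt (2 * (b:ℝ) - 1) with hr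
  have hrsq : r ^ 2 = 2 * (b:ℝ) - 1 := Real.sq_sqrt (by linarith)
  have hr1 : 1 ≤ r := by
    have h := Real.sqrt_le_sqrt (show (1:ℝ) ≤ 2 * (b:ℝ) - 1 by linarith)
    rwa [Real.sqrt_one] at h
  set l := (1 + r) / 2 with hl
  have hl1 : 1 ≤ l := by rw [hl]; linarith
  have hl0 : (0:ℝ) < l := by linarith
  have hl2 : l ^ 2 = l + ((b:ℝ) - 1) / 2 := by
    rw [hl]; linear_combination hrsq / 4
  refine ⟨2 / l ^ 2, by positivity, 0, le_refl 0, ?_⟩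
  intro i
  have hne : {m | ∃ s : Fin i → Bool, (node 1 b (List.ofFn s)).length = m}.Nonempty :=
    ⟨_, fun _ => false, rfl⟩
  have hmem : li 1 b i ∈ {m | ∃ s : Fin i → Bool, (node 1 b (List.ofFn s)).length = m} :=
    Nat.sInf_mem hne
  obtain ⟨s0, hs0⟩ := hmem
  rcases Nat.eq_zero_or_pos i with rfl | hi
  · have hll2 : (2:ℝ) ≤ l ^ 2 := by rw [hl2]; linarith
    have hle1 : 2 / l ^ 2 ≤ 1 := by
      rw [div_le_one (by positivity)]; exact hll2
    have h0 : (0:ℝ) ≤ (li 1 b 0 : ℝ) := Nat.cast_nonneg _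
    simp only [pow_zero, mul_one]
    linarith
  · have hlen : (List.ofFn s0).length = i := List.length_ofFn
    have key := node_length_lb hb hbo l hl1 hl2 i (List.ofFn s0) hlen hi
    rw [hs0] at key
    linarith
end SmoothWords
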